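/- Let C : H → H be a ℤ-linear operator that commutes with ∂_s for every simple reflection s ∈ S. Then there exists a unique function c : W → ℤ such that for every σ ∈ W one has C(δ_σ) = Σ_{π ∈ W, ℓ(πσ) = ℓ(σ) − ℓ(π)} c(π) · δ_{πσ} (a finite sum). Moreover c(π) equals the coefficient of δ_e in C(δ_{π⁻¹}), where e is the identity of W. In other words, every operator commuting with all divided difference operators ∂_s is given by a unique (possibly infinite) linear combination Σ_π c(π) μ_π of martial operators. -/

import Mathlib

open CoxeterSystem

/-- The divided difference operator `∂_s` on the free `ℤ`-module with basis
`{δ_w : w ∈ W}`: `∂_s δ_w = δ_{w s}` if `ℓ(w s) < ℓ(w)`, and `0` otherwise. -/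
noncomputable def partial' {B W : Type*} [Group W] (M : CoxeterMatrix B)
    (cs : CoxeterSystem M W) (i : B) : Module.End ℤ (W →₀ ℤ) :=
  Finsupp.lsum ℤ fun w =>
    if cs.length (w * cs.simple i) < cs.length w then Finsupp.lsingle (w * cs.simple i) else 0

section Aux

variable {B W : Type*} [Group W] (M : CoxeterMatrix B) (cs : CoxeterSystem M W)

lemma partial'_single (i : B) (w : W) (a : ℤ) :
    partial' M cs i (Finsupp.single w a) =
      if cs.length (w * cs.simple i) < cs.length w
      then Finsupp.single (w * cs.simple i) a else 0 := by
  simp only [partial', Finsupp.lsum_single]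
  split <;> simp

lemma partial'_apply (i : B) (f : W →₀ ℤ) (τ : W) :
    (partial' M cs i f) τ =
      if cs.length τ < cs.length (τ * cs.simple i) then f (τ * cs.simple i) else 0 := by
  induction f using Finsupp.induction_linear with
  | zero => simp
  | add f g hf hg =>
      simp only [map_add, Finsupp.add_apply, hf, hg]
      split <;> simp
  | single w a =>
      rw [partial'_single]
      by_cases hw : w = τ * cs.simple i
      · subst hw
        rw [simple_mul_simple_cancel_right]
        split <;> simp
      · have h1 : w * cs.simple i ≠ τ := by
          intro h
          apply hw
          rw [← h, simple_mul_simple_cancel_right]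
        split <;> split <;>
          simp_all [Finsupp.single_apply]

lemma eval_master (C : (W →₀ ℤ) →ₗ[ℤ] (W →₀ ℤ))
    (hC : ∀ i : B, C ∘ₗ partial' M cs i = partial' M cs i ∘ₗ C) (σ τ : W) :
    (C (Finsupp.single σ 1)) τ =
      if cs.length (τ * σ⁻¹) + cs.length τ = cs.length σ
      then (C (Finsupp.single (σ * τ⁻¹) 1)) 1 else 0 := by
  obtain ⟨n, hn⟩ : ∃ n, cs.length τ = n := ⟨_, rfl⟩
  induction n using Nat.strong_induction_on generalizing τ σ with
  | _ n IH =>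
  by_cases hτ : τ = 1
  · subst hτ
    simp [cs.length_inv]
  · obtain ⟨i, hi⟩ := cs.exists_rightDescent_of_ne_one hτ
    rw [IsRightDescent] at hi
    have hτs : cs.length (τ * cs.simple i) + 1 = cs.length τ := by
      rcases cs.length_mul_simple τ i with h | h
      · omega
      · exact h
    by_cases hσ : cs.length (σ * cs.simple i) < cs.length σ
    · have hσs : cs.length (σ * cs.simple i) + 1 = cs.length σ := by
        rcases cs.length_mul_simple σ i with h | h
        · omega
        · exact h
      have h1 : partial' M cs i (Finsupp.single σ (1 : ℤ))
          = Finsupp.single (σ * cs.simple i) 1 := by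
        rw [partial'_single, if_pos hσ]
      have h2 : C (Finsupp.single (σ * cs.simple i) 1)
          = partial' M cs i (C (Finsupp.single σ 1)) := by
        rw [← h1]
        exact DFunLike.congr_fun (hC i) (Finsupp.single σ 1)
      have h3 : (C (Finsupp.single (σ * cs.simple i) 1)) (τ * cs.simple i)
          = (C (Finsupp.single σ 1)) τ := by
        rw [h2, partial'_apply, simple_mul_simple_cancel_right, if_pos (by omega)]
      have e1 : τ * cs.simple i * (σ * cs.simple i)⁻¹ = τ * σ⁻¹ := by
        rw [mul_inv_rev, cs.inv_simple, ← mul_assoc, simple_mul_simple_cancel_right]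
      have e2 : σ * cs.simple i * (τ * cs.simple i)⁻¹ = σ * τ⁻¹ := by
        rw [mul_inv_rev, cs.inv_simple, ← mul_assoc, simple_mul_simple_cancel_right]
      have h4 := IH (cs.length (τ * cs.simple i)) (by omega) (σ * cs.simple i)
        (τ * cs.simple i) rfl
      rw [e1, e2] at h4
      rw [← h3, h4]
      by_cases hc : cs.length (τ * σ⁻¹) + cs.length τ = cs.length σ
      · rw [if_pos (by omega), if_pos hc]
      · rw [if_neg (by omega), if_neg hc]
    · have hσs : cs.length σ < cs.length (σ * cs.simple i) := by
        rcases cs.length_mul_simple σ i with h | h <;> omega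
      have h1 : partial' M cs i (Finsupp.single (σ * cs.simple i) (1 : ℤ))
          = Finsupp.single σ 1 := by
        rw [partial'_single, simple_mul_simple_cancel_right, if_pos hσs]
      have h2 : C (Finsupp.single σ 1)
          = partial' M cs i (C (Finsupp.single (σ * cs.simple i) 1)) := by
        rw [← h1]
        exact DFunLike.congr_fun (hC i) (Finsupp.single (σ * cs.simple i) 1)
      have h3 : (C (Finsupp.single σ 1)) τ = 0 := by
        rw [h2, partial'_apply, if_neg (by omega)]
      rw [h3]
      by_cases hc : cs.length (τ * σ⁻¹) + cs.length τ = cs.length σ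
      · exfalso
        have e3 : σ * cs.simple i = (σ * τ⁻¹) * (τ * cs.simple i) := by group
        have h4 : cs.length (σ * cs.simple i)
            ≤ cs.length (σ * τ⁻¹) + cs.length (τ * cs.simple i) := by
          rw [e3] at hσs ⊢
          exact cs.length_mul_le _ _
        have h5 : cs.length (σ * τ⁻¹) = cs.length (τ * σ⁻¹) := by
          rw [← cs.length_inv (σ * τ⁻¹), mul_inv_rev, inv_inv]
        omega
      · rw [if_neg hc]

end Aux
section Aux2

variable {B W : Type*} [Group W] (M : CoxeterMatrix B) (cs : CoxeterSystem M W)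

lemma formula_master (C : (W →₀ ℤ) →ₗ[ℤ] (W →₀ ℤ))
    (hC : ∀ i : B, C ∘ₗ partial' M cs i = partial' M cs i ∘ₗ C)
    (c : W → ℤ) (hc : ∀ π, c π = C (Finsupp.single π⁻¹ 1) 1) (σ τ : W) :
    (C (Finsupp.single σ 1)) τ =
      if cs.length (τ * σ⁻¹) + cs.length τ = cs.length σ then c (τ * σ⁻¹) else 0 := by
  rw [eval_master M cs C hC σ τ, hc (τ * σ⁻¹)]
  have e : (τ * σ⁻¹)⁻¹ = σ * τ⁻¹ := by rw [mul_inv_rev, inv_inv]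
  rw [e]

lemma formula_eq (C : (W →₀ ℤ) →ₗ[ℤ] (W →₀ ℤ))
    (hC : ∀ i : B, C ∘ₗ partial' M cs i = partial' M cs i ∘ₗ C)
    (c : W → ℤ) (hc : ∀ π, c π = C (Finsupp.single π⁻¹ 1) 1) (σ : W) :
    C (Finsupp.single σ 1)
      = ∑ᶠ π : W,
          if (cs.length (π * σ) : ℤ) = (cs.length σ : ℤ) - (cs.length π : ℤ)
          then c π • Finsupp.single (π * σ) (1 : ℤ) else 0 := by
  classical
  have master := formula_master M cs C hC c hc σ
  set T : Finset W := (C (Finsupp.single σ 1)).support.image (· * σ⁻¹) with hT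
  have hsupp : Function.support (fun π : W =>
      if (cs.length (π * σ) : ℤ) = (cs.length σ : ℤ) - (cs.length π : ℤ)
      then c π • Finsupp.single (π * σ) (1 : ℤ) else 0) ⊆ ↑T := by
    intro π hπ
    rw [Function.mem_support] at hπ
    have hcond : (cs.length (π * σ) : ℤ) = (cs.length σ : ℤ) - (cs.length π : ℤ) := by
      by_contra h
      exact hπ (if_neg h)
    have hcne : c π ≠ 0 := by
      intro h0
      exact hπ (by rw [if_pos hcond, h0, zero_smul])
    have e : π * σ * σ⁻¹ = π := by group
    have hmem : (π * σ) ∈ (C (Finsupp.single σ 1)).support := by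
      rw [Finsupp.mem_support_iff, master (π * σ), e, if_pos (by omega)]
      exact hcne
    exact Finset.mem_coe.mpr (Finset.mem_image.mpr ⟨π * σ, hmem, e⟩)
  rw [finsum_eq_sum_of_support_subset _ hsupp]
  ext τ
  rw [Finsupp.finset_sum_apply]
  have hterm : ∀ π : W,
      (if (cs.length (π * σ) : ℤ) = (cs.length σ : ℤ) - (cs.length π : ℤ)
        then c π • Finsupp.single (π * σ) (1 : ℤ) else 0) τ
      = if π = τ * σ⁻¹
        then (if cs.length (τ * σ⁻¹) + cs.length τ = cs.length σ then c (τ * σ⁻¹) else 0)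
        else 0 := by
    intro π
    by_cases hπ : π = τ * σ⁻¹
    · subst hπ
      have e : τ * σ⁻¹ * σ = τ := by group
      rw [if_pos rfl, e]
      by_cases hcond : (cs.length τ : ℤ) = (cs.length σ : ℤ) - (cs.length (τ * σ⁻¹) : ℤ)
      · rw [if_pos hcond, if_pos (by omega), Finsupp.smul_apply, Finsupp.single_eq_same,
          smul_eq_mul, mul_one]
      · rw [if_neg hcond, if_neg (by omega), Finsupp.coe_zero, Pi.zero_apply]
    · have e : π * σ ≠ τ := by
        intro h
        apply hπ
        rw [← h]
        group
      rw [if_neg hπ]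
      split
      · rw [Finsupp.smul_apply, Finsupp.single_apply, if_neg e, smul_zero]
      · rw [Finsupp.coe_zero, Pi.zero_apply]
  rw [Finset.sum_congr rfl (fun π _ => hterm π), Finset.sum_ite_eq' T (τ * σ⁻¹) _, master τ]
  by_cases hc1 : cs.length (τ * σ⁻¹) + cs.length τ = cs.length σ
  · rw [if_pos hc1]
    by_cases hc2 : c (τ * σ⁻¹) = 0
    · rw [hc2]
      simp
    · have hmem : τ * σ⁻¹ ∈ T := by
        rw [hT]
        refine Finset.mem_image.mpr ⟨τ, ?_, rfl⟩
        rw [Finsupp.mem_support_iff, master τ, if_pos hc1]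
        exact hc2
      rw [if_pos hmem]
  · rw [if_neg hc1]
    simp [if_neg hc1]

lemma coeff_eq (C : (W →₀ ℤ) →ₗ[ℤ] (W →₀ ℤ))
    (hC : ∀ i : B, C ∘ₗ partial' M cs i = partial' M cs i ∘ₗ C)
    (c : W → ℤ)
    (h : ∀ σ : W, C (Finsupp.single σ 1)
        = ∑ᶠ π : W,
            if (cs.length (π * σ) : ℤ) = (cs.length σ : ℤ) - (cs.length π : ℤ)
            then c π • Finsupp.single (π * σ) (1 : ℤ) else 0) :
    ∀ π : W, c π = C (Finsupp.single π⁻¹ 1) 1 := by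
  classical
  intro π
  obtain ⟨n, hn⟩ : ∃ n, cs.length π = n := ⟨_, rfl⟩
  induction n using Nat.strong_induction_on generalizing π with
  | _ n IH =>
  have hform := h π⁻¹
  set T : Finset W := (C (Finsupp.single π⁻¹ 1)).support.image (· * π) with hT
  have master : ∀ τ : W, (C (Finsupp.single π⁻¹ 1)) τ =
      if cs.length (τ * π) + cs.length τ = cs.length π
      then C (Finsupp.single ((τ * π)⁻¹) 1) 1 else 0 := by
    intro τ
    rw [eval_master M cs C hC π⁻¹ τ]
    simp only [inv_inv, mul_inv_rev, cs.length_inv]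
  have hsupp : Function.support (fun ρ : W =>
      if (cs.length (ρ * π⁻¹) : ℤ) = (cs.length π⁻¹ : ℤ) - (cs.length ρ : ℤ)
      then c ρ • Finsupp.single (ρ * π⁻¹) (1 : ℤ) else 0) ⊆ ↑(insert π T) := by
    intro ρ hρ
    rw [Function.mem_support] at hρ
    have hcond : (cs.length (ρ * π⁻¹) : ℤ) = (cs.length π⁻¹ : ℤ) - (cs.length ρ : ℤ) := by
      by_contra hcond
      exact hρ (if_neg hcond)
    have hcne : c ρ ≠ 0 := by
      intro h0
      exact hρ (by rw [if_pos hcond, h0, zero_smul])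
    by_cases hρπ : ρ = π
    · exact Finset.mem_coe.mpr (hρπ ▸ Finset.mem_insert_self π T)
    · have hne : ρ * π⁻¹ ≠ 1 := fun hh => hρπ (by rwa [mul_inv_eq_one] at hh)
      have hlen : cs.length (ρ * π⁻¹) ≠ 0 := by
        rwa [Ne, cs.length_eq_zero_iff]
      have hlp : cs.length π⁻¹ = cs.length π := cs.length_inv π
      have hcρ : c ρ = C (Finsupp.single ρ⁻¹ 1) 1 := IH (cs.length ρ) (by omega) ρ rfl
      have e : ρ * π⁻¹ * π = ρ := by group
      have hval : (C (Finsupp.single π⁻¹ 1)) (ρ * π⁻¹) = C (Finsupp.single ρ⁻¹ 1) 1 := by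
        rw [master (ρ * π⁻¹), e, if_pos (by omega)]
      have hmem : ρ * π⁻¹ ∈ (C (Finsupp.single π⁻¹ 1)).support := by
        rw [Finsupp.mem_support_iff, hval, ← hcρ]
        exact hcne
      exact Finset.mem_coe.mpr
        (Finset.mem_insert_of_mem (Finset.mem_image.mpr ⟨ρ * π⁻¹, hmem, e⟩))
  have heval : (C (Finsupp.single π⁻¹ 1)) 1
      = ∑ ρ ∈ insert π T,
          (if (cs.length (ρ * π⁻¹) : ℤ) = (cs.length π⁻¹ : ℤ) - (cs.length ρ : ℤ)
            then c ρ • Finsupp.single (ρ * π⁻¹) (1 : ℤ) else 0) 1 := by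
    rw [hform, finsum_eq_sum_of_support_subset _ hsupp, Finsupp.finset_sum_apply]
  have hterm : ∀ ρ : W,
      (if (cs.length (ρ * π⁻¹) : ℤ) = (cs.length π⁻¹ : ℤ) - (cs.length ρ : ℤ)
        then c ρ • Finsupp.single (ρ * π⁻¹) (1 : ℤ) else 0) 1
      = if ρ = π then c ρ else 0 := by
    intro ρ
    by_cases hρπ : ρ = π
    · subst hρπ
      have e : ρ * ρ⁻¹ = 1 := by group
      rw [e, if_pos rfl]
      simp [cs.length_inv]
    · rw [if_neg hρπ]
      have hne : ρ * π⁻¹ ≠ 1 := fun hh => hρπ (by rwa [mul_inv_eq_one] at hh)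
      split
      · rw [Finsupp.smul_apply, Finsupp.single_apply, if_neg hne, smul_zero]
      · rw [Finsupp.coe_zero, Pi.zero_apply]
  rw [Finset.sum_congr rfl (fun ρ _ => hterm ρ),
    Finset.sum_ite_eq' (insert π T) π c, if_pos (Finset.mem_insert_self π T)] at heval
  exact heval.symm

end Aux2

/-- Every `ℤ`-linear operator `C` on `H` commuting with all divided difference operators
`∂_s` is given by a unique (possibly infinite) linear combination `Σ_π c(π) μ_π` of
martial operators: there is a unique `c : W → ℤ` with
`C(δ_σ) = Σ_{π, ℓ(πσ) = ℓ(σ) − ℓ(π)} c(π) · δ_{πσ}` for all `σ` (a finite sum),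
and moreover `c(π)` is the coefficient of `δ_e` in `C(δ_{π⁻¹})`. -/
theorem commutant_of_divided_differences
    {B W : Type*} [Group W] (M : CoxeterMatrix B) (cs : CoxeterSystem M W)
    (C : (W →₀ ℤ) →ₗ[ℤ] (W →₀ ℤ))
    (hC : ∀ i : B, C ∘ₗ partial' M cs i = partial' M cs i ∘ₗ C) :
    (∃! c : W → ℤ, ∀ σ : W,
      C (Finsupp.single σ 1)
        = ∑ᶠ π : W,
            if (cs.length (π * σ) : ℤ) = (cs.length σ : ℤ) - (cs.length π : ℤ)
            then c π • Finsupp.single (π * σ) (1 : ℤ) else 0)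
    ∧ (∀ c : W → ℤ,
        (∀ σ : W, C (Finsupp.single σ 1)
          = ∑ᶠ π : W,
              if (cs.length (π * σ) : ℤ) = (cs.length σ : ℤ) - (cs.length π : ℤ)
              then c π • Finsupp.single (π * σ) (1 : ℤ) else 0) →
        ∀ π : W, c π = C (Finsupp.single π⁻¹ 1) 1) := by
  constructor
  · refine ⟨fun π => C (Finsupp.single π⁻¹ 1) 1,
      fun σ => formula_eq M cs C hC _ (fun _ => rfl) σ, ?_⟩
    intro c' hc'
    funext π
    exact coeff_eq M cs C hC c' hc' π
  · exact fun c hc π => coeff_eq M cs C hC c hc π
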